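/- Let (Ω, ℙ) be a probability space, let Q̂ and Ẑ be real random variables with Ẑ(ω) ≠ 0 for almost every ω, and let Q ∈ ℝ and Z ∈ ℝ with Z ≠ 0. Suppose in addition there is a constant K ≥ 0 such that |Q̂(ω)/Ẑ(ω)| ≤ K for almost every ω. Then the mean square error of the ratio estimator satisfies E[(Q/Z − Q̂/Ẑ)²] ≤ (2/Z²) · max{1, K²} · ( E[(Q̂ − Q)²] + E[(Ẑ − Z)²] ). -/

import Mathlib

open MeasureTheory

lemma ratio_ptwise (Q Z q z K : ℝ) (hZ : Z ≠ 0) (hz : z ≠ 0)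
    (hb : |q / z| ≤ K) :
    (Q / Z - q / z) ^ 2 ≤ 2 / Z ^ 2 * max 1 (K ^ 2) * ((q - Q) ^ 2 + (z - Z) ^ 2) := by
  set r := q / z with hr
  have hZ2 : (0:ℝ) < Z ^ 2 := by positivity
  have hid : Q / Z - r = ((Q - q) + r * (z - Z)) / Z := by
    field_simp [hr]
    have hrz : r * z = q := by rw [hr, div_mul_cancel₀ q hz]
    linear_combination (-1 : ℝ) * hrz
  have hr2 : r ^ 2 ≤ K ^ 2 := by
    have := abs_nonneg (q / z)
    nlinarith [sq_abs (q / z)]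
  have hM1 : (1:ℝ) ≤ max 1 (K ^ 2) := le_max_left _ _
  have hM2 : K ^ 2 ≤ max 1 (K ^ 2) := le_max_right _ _
  rw [hid, div_pow]
  rw [div_le_iff₀ hZ2]
  have key : ((Q - q) + r * (z - Z)) ^ 2 ≤ 2 * max 1 (K ^ 2) * ((q - Q) ^ 2 + (z - Z) ^ 2) := by
    nlinarith [sq_nonneg ((Q - q) - r * (z - Z)), sq_nonneg (z - Z), sq_nonneg (Q - q)]
  calc ((Q - q) + r * (z - Z)) ^ 2 ≤ 2 * max 1 (K ^ 2) * ((q - Q) ^ 2 + (z - Z) ^ 2) := key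
    _ = 2 / Z ^ 2 * max 1 (K ^ 2) * ((q - Q) ^ 2 + (z - Z) ^ 2) * Z ^ 2 := by
        field_simp

/-- Mean square error bound for the ratio estimator with uniformly bounded
ratio: if `|Q̂/Ẑ| ≤ K` almost surely, then
`E[(Q/Z − Q̂/Ẑ)²] ≤ (2/Z²) max{1, K²} (E[(Q̂ − Q)²] + E[(Ẑ − Z)²])`. -/
theorem statement9 {Ω : Type*} [MeasurableSpace Ω] (P : Measure Ω)
    [IsProbabilityMeasure P] (Qhat Zhat : Ω → ℝ)
    (hQm : Measurable Qhat) (hZm : Measurable Zhat)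
    (hZne : ∀ᵐ ω ∂P, Zhat ω ≠ 0)
    (Q Z : ℝ) (hZ : Z ≠ 0)
    (K : ℝ) (hK : 0 ≤ K) (hbd : ∀ᵐ ω ∂P, |Qhat ω / Zhat ω| ≤ K) :
    ∫⁻ ω, ENNReal.ofReal ((Q / Z - Qhat ω / Zhat ω) ^ 2) ∂P
      ≤ ENNReal.ofReal (2 / Z ^ 2 * max 1 (K ^ 2)) *
        (∫⁻ ω, ENNReal.ofReal ((Qhat ω - Q) ^ 2) ∂P
          + ∫⁻ ω, ENNReal.ofReal ((Zhat ω - Z) ^ 2) ∂P) := by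
  set c : ℝ := 2 / Z ^ 2 * max 1 (K ^ 2) with hc
  have hc0 : 0 ≤ c := by positivity
  have step1 : ∫⁻ ω, ENNReal.ofReal ((Q / Z - Qhat ω / Zhat ω) ^ 2) ∂P
      ≤ ∫⁻ ω, ENNReal.ofReal c *
          (ENNReal.ofReal ((Qhat ω - Q) ^ 2) + ENNReal.ofReal ((Zhat ω - Z) ^ 2)) ∂P := by
    apply lintegral_mono_ae
    filter_upwards [hZne, hbd] with ω hz hb
    rw [← ENNReal.ofReal_add (sq_nonneg _) (sq_nonneg _),
        ← ENNReal.ofReal_mul hc0]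
    exact ENNReal.ofReal_le_ofReal (ratio_ptwise Q Z (Qhat ω) (Zhat ω) K hZ hz hb)
  refine step1.trans_eq ?_
  rw [lintegral_const_mul]
  · rw [lintegral_add_left]
    exact (hQm.sub measurable_const).pow_const 2 |>.ennreal_ofReal
  · exact ((hQm.sub measurable_const).pow_const 2 |>.ennreal_ofReal).add
      ((hZm.sub measurable_const).pow_const 2 |>.ennreal_ofReal)
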